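/- arXiv:1601.07937 — 6 statements merged into one kernel-verified Lean document; each statement's English description precedes it below -/
import Mathlib

section
/- (Babuška–Nečas theorem.) Let X and Y be Hilbert spaces over a fixed field 𝔽 ∈ {ℝ, ℂ}, let ℓ : Y → 𝔽 be a continuous linear form and b0 : X × Y → 𝔽 a continuous bilinear form (sesquilinear if 𝔽 = ℂ). If there exists an inf-sup constant γ > 0 such that for all x ∈ X, sup_{y ∈ Y\{0}} |b0(x,y)|/‖y‖_Y ≥ γ‖x‖_X, and ℓ satisfies the compatibility condition ℓ(y) = 0 for all y ∈ Y00 = {y ∈ Y : b0(x,y) = 0 for all x ∈ X}, then the problem of finding x ∈ X with b0(x,y) = ℓ(y) for all y ∈ Y has a unique solution x, and it satisfies the stability estimate ‖x‖_X ≤ (1/γ)‖ℓ‖_{Y'}, where ‖ℓ‖_{Y'} = sup_{y ∈ Y\{0}} |ℓ(y)|/‖y‖_Y. -/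
/-- Babuška–Nečas theorem: if the continuous bilinear (sesquilinear) form `b0`
on `X × Y` satisfies the inf-sup condition with constant `γ > 0` and the
continuous linear form `ℓ` vanishes on
`Y00 = {y ∈ Y : b0(x,y) = 0 for all x ∈ X}`, then the problem
`b0(x,y) = ℓ(y)` for all `y ∈ Y` has a unique solution `x`, which satisfies
`‖x‖_X ≤ (1/γ)‖ℓ‖_{Y'}`. -/
theorem stmt_3 {𝕜 X Y : Type*} [RCLike 𝕜]
    [NormedAddCommGroup X] [InnerProductSpace 𝕜 X] [CompleteSpace X]
    [NormedAddCommGroup Y] [InnerProductSpace 𝕜 Y] [CompleteSpace Y]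
    (b0 : X →SL[starRingEnd 𝕜] Y →L[𝕜] 𝕜) (ℓ : Y →L[𝕜] 𝕜)
    (γ : ℝ) (hγ : 0 < γ)
    (hinf : ∀ x : X,
      γ * ‖x‖ ≤ sSup ((fun y => ‖b0 x y‖ / ‖y‖) '' {y : Y | y ≠ 0}))
    (hcompat : ∀ y : Y, (∀ x : X, b0 x y = 0) → ℓ y = 0) :
    ∃ x : X, (∀ y : Y, b0 x y = ℓ y) ∧ ‖x‖ ≤ 1 / γ * ‖ℓ‖ ∧
      ∀ x' : X, (∀ y : Y, b0 x' y = ℓ y) → x' = x := by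
  have key : ∀ x : X, γ * ‖x‖ ≤ ‖b0 x‖ := by
    intro x
    refine (hinf x).trans (Real.sSup_le ?_ (norm_nonneg _))
    rintro r ⟨y, hy, rfl⟩
    rw [div_le_iff₀ (norm_pos_iff.2 hy)]
    exact (b0 x).le_opNorm y
  set td := InnerProductSpace.toDual 𝕜 Y with htd
  set Bf : X → Y := fun x => td.symm (b0 x) with hBf
  have hB : ∀ (x : X) (y : Y), (inner 𝕜 (Bf x) y : 𝕜) = b0 x y := by
    intro x y
    simp [hBf, htd, InnerProductSpace.toDual_symm_apply]
  have hBnorm : ∀ x : X, ‖Bf x‖ = ‖b0 x‖ := fun x => td.symm.norm_map _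
  let R : Submodule 𝕜 Y :=
    { carrier := Set.range Bf
      add_mem' := by rintro _ _ ⟨a, rfl⟩ ⟨b, rfl⟩; exact ⟨a + b, by simp [hBf]⟩
      zero_mem' := ⟨0, by simp [hBf]⟩
      smul_mem' := by rintro c _ ⟨a, rfl⟩; exact ⟨c • a, by simp [hBf, map_smulₛₗ, starRingEnd_self_apply]⟩ }
  have hanti : AntilipschitzWith ⟨γ⁻¹, by positivity⟩ Bf := by
    refine AntilipschitzWith.of_le_mul_dist fun x x' => ?_
    have h1 : Bf x - Bf x' = Bf (x - x') := by simp [hBf]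
    rw [dist_eq_norm, dist_eq_norm, h1, hBnorm]
    have := key (x - x')
    change ‖x - x'‖ ≤ γ⁻¹ * ‖b0 (x - x')‖
    rw [← le_div_iff₀' hγ] at this
    simpa [div_eq_inv_mul] using this
  have huc : UniformContinuous Bf :=
    td.symm.isometry.uniformContinuous.comp b0.uniformContinuous
  have hclosed : IsClosed (R : Set Y) := hanti.isClosed_range huc
  set w : Y := td.symm ℓ with hw
  have hwmem : w ∈ R := by
    have h2 : w ∈ Rᗮᗮ := by
      rw [Submodule.mem_orthogonal]
      intro u hu
      have hbu : ∀ x : X, b0 x u = 0 := by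
        intro x
        rw [← hB]
        exact ((Submodule.mem_orthogonal R u).1 hu (Bf x) ⟨x, rfl⟩)
      have : (inner 𝕜 w u : 𝕜) = ℓ u := by
        simp [hw, htd, InnerProductSpace.toDual_symm_apply]
      have h3 : (inner 𝕜 w u : 𝕜) = 0 := by rw [this]; exact hcompat u hbu
      rw [← inner_conj_symm, h3, map_zero]
    rwa [Submodule.orthogonal_orthogonal_eq_closure,
      IsClosed.submodule_topologicalClosure_eq hclosed] at h2
  obtain ⟨x, hx⟩ : ∃ x, Bf x = w := hwmem
  have hsol : ∀ y : Y, b0 x y = ℓ y := by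
    intro y
    rw [← hB, hx]
    simp [hw, htd, InnerProductSpace.toDual_symm_apply]
  refine ⟨x, hsol, ?_, ?_⟩
  · have h1 : γ * ‖x‖ ≤ ‖ℓ‖ := by
      have := key x
      rw [← hBnorm, hx, hw] at this
      simpa [td.symm.norm_map] using this
    rw [div_mul_eq_mul_div, le_div_iff₀ hγ, mul_comm]
    linarith
  · intro x' hx'
    have heq : b0 x' = b0 x := by
      ext y; rw [hsol y, hx' y]
    have : γ * ‖x' - x‖ ≤ 0 := by
      have := key (x' - x)
      simpa [map_sub, heq] using this
    have : ‖x' - x‖ ≤ 0 := by nlinarith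
    have : x' - x = 0 := norm_le_zero_iff.1 this
    exact sub_eq_zero.1 this
end

section
/- Let U and V be real Hilbert spaces, let V' denote the topological dual of V with dual norm ‖f‖_{V'} = sup_{v ∈ V\{0}} |f(v)|/‖v‖_V, let B : U → V' be a continuous linear operator, and let ℓ ∈ V'. Suppose there exists γ > 0 such that ‖Bu‖_{V'} ≥ γ‖u‖_U for all u ∈ U, and let U_h be a closed subspace of U. Then there exists a unique u_h ∈ U_h minimizing the residual, i.e. ‖B u_h − ℓ‖_{V'}² ≤ ‖Bu − ℓ‖_{V'}² for all u ∈ U_h, with equality only for u = u_h. -/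
open RealInnerProductSpace

/-- Existence and uniqueness of the residual minimizer: if `B : U → V'` is a
continuous linear operator which is bounded below (`‖Bu‖_{V'} ≥ γ‖u‖_U` for some
`γ > 0`), `ℓ ∈ V'`, and `U_h` is a closed subspace of `U`, then there is a unique
`u_h ∈ U_h` minimizing `u ↦ ‖Bu − ℓ‖_{V'}²` over `U_h`, with equality in the
minimization only for `u = u_h`. -/
theorem stmt_4 {U V : Type*}
    [NormedAddCommGroup U] [InnerProductSpace ℝ U] [CompleteSpace U]
    [NormedAddCommGroup V] [InnerProductSpace ℝ V] [CompleteSpace V]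
    (B : U →L[ℝ] StrongDual ℝ V) (ℓ : StrongDual ℝ V)
    (γ : ℝ) (hγ : 0 < γ) (hB : ∀ u : U, γ * ‖u‖ ≤ ‖B u‖)
    (Uh : Submodule ℝ U) (hUh : IsClosed (Uh : Set U)) :
    ∃ uh ∈ Uh, ∀ u ∈ Uh,
      ‖B uh - ℓ‖ ^ 2 ≤ ‖B u - ℓ‖ ^ 2 ∧
      (‖B u - ℓ‖ ^ 2 = ‖B uh - ℓ‖ ^ 2 → u = uh) := by
  -- Riesz isomorphism from V' back to V
  set e := (InnerProductSpace.toDual ℝ V).symm with he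
  -- build φ = e ∘ B as an ℝ-linear continuous map by hand (e is star-semilinear)
  let φL : U →ₗ[ℝ] V :=
    { toFun := fun u => e (B u)
      map_add' := fun x y => by simp [map_add]
      map_smul' := fun c x => by
        simp only [map_smul, RingHom.id_apply, LinearIsometryEquiv.map_smulₛₗ] }
  have hcont : Continuous φL := e.continuous.comp B.continuous
  set φ : U →L[ℝ] V := ⟨φL, hcont⟩ with hφ
  have hφapp : ∀ u : U, φ u = e (B u) := fun u => rfl
  set l : V := e ℓ with hl
  have hnorm : ∀ u : U, ‖B u - ℓ‖ = ‖l - φ u‖ := by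
    intro u
    rw [norm_sub_rev]
    have : l - φ u = e (ℓ - B u) := by rw [hφapp, hl, map_sub]
    rw [this, e.norm_map, norm_sub_rev]
  -- φ is bounded below
  have hφb : ∀ u : U, γ * ‖u‖ ≤ ‖φ u‖ := by
    intro u
    rw [hφapp, e.norm_map]; exact hB u
  have hφinj : ∀ u : U, φ u = 0 → u = 0 := by
    intro u hu
    have h1 : γ * ‖u‖ ≤ 0 := by simpa [hu] using hφb u
    have h2 : ‖u‖ ≤ 0 := by nlinarith [norm_nonneg u]
    simpa using le_antisymm h2 (norm_nonneg u)
  -- the image subspace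
  set K : Submodule ℝ V := Uh.map (φ : U →ₗ[ℝ] V) with hK
  -- K is complete
  haveI : CompleteSpace Uh := hUh.completeSpace_coe
  have hψ := (φ.comp Uh.subtypeL).antilipschitz_of_bound (K := ⟨γ⁻¹, by positivity⟩)
    (fun x => by
      change ‖x‖ ≤ γ⁻¹ * _
      rw [inv_mul_eq_div, le_div_iff₀ hγ, mul_comm]
      exact hφb x)
  have hcomp : IsComplete (K : Set V) := by
    have hrange : (K : Set V) = Set.range ⇑(φ.comp Uh.subtypeL) := by
      ext w
      simp only [SetLike.mem_coe, hK, Submodule.mem_map, Set.mem_range,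
        ContinuousLinearMap.coe_comp', Function.comp_apply, Submodule.coe_subtypeL',
        Submodule.coe_subtype]
      constructor
      · rintro ⟨x, hx, rfl⟩; exact ⟨⟨x, hx⟩, rfl⟩
      · rintro ⟨⟨x, hx⟩, rfl⟩; exact ⟨x, hx, rfl⟩
    rw [hrange]
    exact (hψ.isClosed_range (φ.comp Uh.subtypeL).uniformContinuous).isComplete
  obtain ⟨v, hvK, hvmin⟩ := K.exists_norm_eq_iInf_of_complete_subspace hcomp l
  obtain ⟨uh, huhUh, huh'⟩ := hvK
  have huh : φ uh = v := huh'
  have hvK : v ∈ K := ⟨uh, huhUh, huh'⟩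
  refine ⟨uh, huhUh, fun u hu => ?_⟩
  have hmem : φ u ∈ K := ⟨u, hu, rfl⟩
  have hle : ‖l - v‖ ≤ ‖l - φ u‖ := by
    rw [hvmin]
    exact ciInf_le ⟨0, fun x ⟨w, hw⟩ => hw ▸ norm_nonneg _⟩ (⟨φ u, hmem⟩ : (K : Set V))
  have hle' : ‖B uh - ℓ‖ ≤ ‖B u - ℓ‖ := by
    rw [hnorm, hnorm, huh]; exact hle
  constructor
  · exact pow_le_pow_left₀ (norm_nonneg _) hle' 2
  · intro heq
    have heqn : ‖l - φ u‖ = ‖l - v‖ := by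
      have h0 : ‖B u - ℓ‖ = ‖B uh - ℓ‖ := by
        nlinarith [norm_nonneg (B u - ℓ), norm_nonneg (B uh - ℓ)]
      rw [hnorm, hnorm] at h0
      rw [h0, huh]
    have horth1 := (Submodule.norm_eq_iInf_iff_real_inner_eq_zero K hvK).1 hvmin
    have horth2 := (Submodule.norm_eq_iInf_iff_real_inner_eq_zero K hmem).1
      (heqn.trans hvmin)
    have hdiff : φ u - v ∈ K := K.sub_mem hmem hvK
    have hz : ⟪φ u - v, φ u - v⟫ = 0 := by
      have h1 := horth1 _ hdiff
      have h2 := horth2 _ hdiff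
      have h3 : (l - v) - (l - φ u) = φ u - v := by abel
      calc ⟪φ u - v, φ u - v⟫ = ⟪(l - v) - (l - φ u), φ u - v⟫ := by rw [h3]
        _ = ⟪l - v, φ u - v⟫ - ⟪l - φ u, φ u - v⟫ := by rw [inner_sub_left]
        _ = 0 := by rw [h1, h2]; ring
    have hφeq : φ u = v := sub_eq_zero.mp (inner_self_eq_zero.mp hz)
    have hz2 : φ (u - uh) = 0 := by rw [map_sub, hφeq, huh, sub_self]
    exact sub_eq_zero.mp (hφinj _ hz2)
end

section
/- Let U and V be real Hilbert spaces, V' the topological dual of V with dual norm ‖f‖_{V'} = sup_{v ∈ V\{0}} |f(v)|/‖v‖_V, R_V : V → V' the Riesz map determined by (R_V v)(w) = (v,w)_V, B : U → V' a continuous linear operator with associated bilinear form b(u,v) = (Bu)(v), ℓ ∈ V', and U_h a closed subspace of U. Then a pair (u_h, ψ) ∈ U_h × V satisfies the saddle-point system: −(ψ, v)_V + b(u_h, v) = ℓ(v) for all v ∈ V, and b(δu, ψ) = 0 for all δu ∈ U_h, if and only if ψ = R_V⁻¹(B u_h − ℓ) and u_h minimizes u ↦ ‖Bu − ℓ‖_{V'}²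 over U_h. -/
open scoped RealInnerProductSpace

/-- Saddle-point characterization of the residual minimizer: `(u_h, ψ)` with
`u_h ∈ U_h` satisfies the system `−(ψ,v)_V + b(u_h,v) = ℓ(v)` for all `v ∈ V`
and `b(δu,ψ) = 0` for all `δu ∈ U_h` if and only if `ψ = R_V⁻¹(B u_h − ℓ)` is
the error representation function and `u_h` minimizes `u ↦ ‖Bu − ℓ‖_{V'}²`
over `U_h`. -/
theorem stmt_6 {U V : Type*}
    [NormedAddCommGroup U] [InnerProductSpace ℝ U] [CompleteSpace U]
    [NormedAddCommGroup V] [InnerProductSpace ℝ V] [CompleteSpace V]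
    (B : U →L[ℝ] StrongDual ℝ V) (ℓ : StrongDual ℝ V)
    (Uh : Submodule ℝ U) (hUh : IsClosed (Uh : Set U))
    (uh : U) (huh : uh ∈ Uh) (ψ : V) :
    ((∀ v : V, -⟪ψ, v⟫ + B uh v = ℓ v) ∧ (∀ δu ∈ Uh, B δu ψ = 0)) ↔
      (ψ = (InnerProductSpace.toDual ℝ V).symm (B uh - ℓ) ∧
        ∀ u ∈ Uh, ‖B uh - ℓ‖ ^ 2 ≤ ‖B u - ℓ‖ ^ 2) := by
  set e := (InnerProductSpace.toDual ℝ V).symm with he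
  have hnorm : ∀ f : StrongDual ℝ V, ‖e f‖ = ‖f‖ := fun f => by
    simp [he]
  have hip : ∀ (f : StrongDual ℝ V) (v : V), ⟪e f, v⟫ = f v := by
    intro f v
    rw [he]
    exact InnerProductSpace.toDual_symm_apply (𝕜 := ℝ) (E := V)
  constructor
  · rintro ⟨h1, h2⟩
    have hpsi : ψ = e (B uh - ℓ) := by
      have hd : (InnerProductSpace.toDual ℝ V) ψ = B uh - ℓ := by
        ext v
        simp only [InnerProductSpace.toDual_apply_apply, ContinuousLinearMap.coe_sub',
          Pi.sub_apply]
        have := h1 v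
        linarith
      rw [he, ← hd, LinearIsometryEquiv.symm_apply_apply]
    refine ⟨hpsi, ?_⟩
    intro u hu
    have hdiff : u - uh ∈ Uh := Uh.sub_mem hu huh
    have key : e (B u - ℓ) = ψ + e (B (u - uh)) := by
      rw [hpsi, ← map_add]
      congr 1
      rw [map_sub]
      abel
    have h0 : ⟪ψ, e (B (u - uh))⟫ = 0 := by
      rw [real_inner_comm, hip]
      exact h2 _ hdiff
    calc ‖B uh - ℓ‖ ^ 2 = ‖ψ‖ ^ 2 := by rw [← hnorm, ← hpsi]
      _ ≤ ‖ψ + e (B (u - uh))‖ ^ 2 := by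
          rw [norm_add_sq_real, h0]
          nlinarith [sq_nonneg ‖e (B (u - uh))‖]
      _ = ‖B u - ℓ‖ ^ 2 := by rw [← key, hnorm]
  · rintro ⟨hpsi, hmin⟩
    have hpsiip : ∀ v : V, ⟪ψ, v⟫ = B uh v - ℓ v := by
      intro v
      rw [hpsi, hip]
      simp
    constructor
    · intro v
      rw [hpsiip v]; ring
    · intro δu hδu
      set c := B δu ψ with hc
      set w := e (B δu) with hw
      have hcw : ⟪ψ, w⟫ = c := by rw [hw, real_inner_comm, hip]
      have key : ∀ t : ℝ, 0 ≤ 2 * t * c + t ^ 2 * ‖w‖ ^ 2 := by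
        intro t
        have hmem : uh + t • δu ∈ Uh := Uh.add_mem huh (Uh.smul_mem t hδu)
        have := hmin _ hmem
        have hEq : e (B (uh + t • δu) - ℓ) = ψ + t • w := by
          rw [hpsi, hw, ← map_smul, ← map_add]
          congr 1
          rw [map_add, map_smul]
          abel
        have h1 : ‖B (uh + t • δu) - ℓ‖ ^ 2 = ‖ψ + t • w‖ ^ 2 := by
          rw [← hnorm, hEq]
        have h2 : ‖ψ‖ ^ 2 = ‖B uh - ℓ‖ ^ 2 := by rw [← hnorm, ← hpsi]
        have h3 : ‖ψ + t • w‖ ^ 2 = ‖ψ‖ ^ 2 + 2 * t * c + t ^ 2 * ‖w‖ ^ 2 := by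
          rw [norm_add_sq_real, real_inner_smul_right, hcw, norm_smul]
          simp [mul_pow]
          ring
        nlinarith
      have hq : ∀ t : ℝ, 0 ≤ ‖w‖ ^ 2 * (t * t) + (2 * c) * t + 0 := by
        intro t
        have := key t
        nlinarith
      have hdisc := discrim_le_zero hq
      rw [discrim] at hdisc
      nlinarith [sq_nonneg c]
end

section
/- Let U and V be real Hilbert spaces, V' the topological dual of V with dual norm ‖f‖_{V'} = sup_{v ∈ V\{0}} |f(v)|/‖v‖_V, R_V : V → V' the Riesz map determined by (R_V v)(w) = (v,w)_V, B : U → V' a continuous linear operator with associated bilinear form b(u,v) = (Bu)(v), and U_h a subspace of U. Define the optimal test space V^opt = R_V⁻¹(B(U_h)) = {R_V⁻¹(B δu) : δu ∈ U_h}. Then for every u ∈ U_h with Bu ≠ 0, sup_{v ∈ V^opt\{0}} |b(u,v)|/‖v‖_V = ‖Bu‖_{V'} = sup_{v ∈ V\{0}} |b(u,v)|/‖v‖_V. Consequently, if γ > 0 satisfies ‖Bu‖_{V'} ≥ γ‖u‖_U for all u ∈ U (the continuous inf-sup condition), then for every nonzero u ∈ U_h, sup_{v ∈ V^opt\{0}}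 |b(u,v)|/‖v‖_V ≥ γ‖u‖_U, i.e. the discrete pair (U_h, V^opt) inherits the stability of the original problem. -/
section aux
variable {V : Type*} [NormedAddCommGroup V] [InnerProductSpace ℝ V] [CompleteSpace V]

lemma aux_ratio_le (f : StrongDual ℝ V) (v : V) : ‖f v‖ / ‖v‖ ≤ ‖f‖ := by
  rcases eq_or_ne v 0 with rfl | hv
  · simp [norm_nonneg]
  · rw [div_le_iff₀ (norm_pos_iff.mpr hv)]
    exact f.le_opNorm v

lemma aux_ratio_eq (f : StrongDual ℝ V) (hf : f ≠ 0) :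
    ‖f ((InnerProductSpace.toDual ℝ V).symm f)‖ /
      ‖(InnerProductSpace.toDual ℝ V).symm f‖ = ‖f‖ := by
  set w := (InnerProductSpace.toDual ℝ V).symm f with hw
  have hnw : ‖w‖ = ‖f‖ := (InnerProductSpace.toDual ℝ V).symm.norm_map f
  have hw0 : w ≠ 0 := by
    intro h
    apply hf
    have : (InnerProductSpace.toDual ℝ V) w = f :=
      (InnerProductSpace.toDual ℝ V).apply_symm_apply f
    rw [h, map_zero] at this; exact this.symm
  have hfw : f w = ‖w‖ ^ 2 := by
    have := (InnerProductSpace.toDual ℝ V).apply_symm_apply f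
    calc f w = (InnerProductSpace.toDual ℝ V) w w := by rw [this]
    _ = ‖w‖ ^ 2 := by
      rw [InnerProductSpace.toDual_apply_apply, real_inner_self_eq_norm_sq]
  rw [hfw, hnw]
  have hfpos : 0 < ‖f‖ := norm_pos_iff.mpr hf
  rw [Real.norm_of_nonneg (by positivity), sq, mul_div_assoc, div_self hfpos.ne', mul_one]

end aux

/-- Optimal test space reproduces the supremum: for `u ∈ U_h` with `Bu ≠ 0`,
the supremum of `|b(u,v)|/‖v‖` over the nonzero elements of the optimal test
space `V^opt = R_V⁻¹(B(U_h))` equals `‖Bu‖_{V'}`, which equals the supremum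
over all nonzero `v ∈ V`. Consequently, a continuous inf-sup condition with
constant `γ > 0` is inherited by the discrete pair `(U_h, V^opt)`. -/
theorem stmt_7 {U V : Type*}
    [NormedAddCommGroup U] [InnerProductSpace ℝ U] [CompleteSpace U]
    [NormedAddCommGroup V] [InnerProductSpace ℝ V] [CompleteSpace V]
    (B : U →L[ℝ] StrongDual ℝ V)
    (Uh : Submodule ℝ U)
    (Vopt : Set V)
    (hVopt : Vopt =
      (fun δu => (InnerProductSpace.toDual ℝ V).symm (B δu)) '' (Uh : Set U)) :
    (∀ u ∈ Uh, B u ≠ 0 →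
        sSup ((fun v => ‖B u v‖ / ‖v‖) '' (Vopt \ {0})) = ‖B u‖ ∧
        ‖B u‖ = sSup ((fun v => ‖B u v‖ / ‖v‖) '' {v : V | v ≠ 0})) ∧
      ∀ γ : ℝ, 0 < γ → (∀ u : U, γ * ‖u‖ ≤ ‖B u‖) →
        ∀ u ∈ Uh, u ≠ 0 →
          γ * ‖u‖ ≤ sSup ((fun v => ‖B u v‖ / ‖v‖) '' (Vopt \ {0})) := by
  have key : ∀ u ∈ Uh, B u ≠ 0 →
      sSup ((fun v => ‖B u v‖ / ‖v‖) '' (Vopt \ {0})) = ‖B u‖ := by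
    intro u hu hBu
    set w := (InnerProductSpace.toDual ℝ V).symm (B u) with hw
    have hw0 : w ≠ 0 := by
      intro h
      apply hBu
      have := (InnerProductSpace.toDual ℝ V).apply_symm_apply (B u)
      rw [← hw, h] at this; simp [← this]
    have hwmem : w ∈ Vopt \ {0} := by
      constructor
      · rw [hVopt]; exact ⟨u, hu, rfl⟩
      · simpa using hw0
    have hmem : ‖B u‖ ∈ (fun v => ‖B u v‖ / ‖v‖) '' (Vopt \ {0}) :=
      ⟨w, hwmem, aux_ratio_eq (B u) hBu⟩
    have hbdd : ∀ x ∈ (fun v => ‖B u v‖ / ‖v‖) '' (Vopt \ {0}), x ≤ ‖B u‖ := by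
      rintro x ⟨v, _, rfl⟩; exact aux_ratio_le (B u) v
    exact le_antisymm (csSup_le ⟨_, hmem⟩ hbdd) (le_csSup ⟨‖B u‖, hbdd⟩ hmem)
  constructor
  · intro u hu hBu
    refine ⟨key u hu hBu, ?_⟩
    set w := (InnerProductSpace.toDual ℝ V).symm (B u) with hw
    have hw0 : w ≠ 0 := by
      intro h
      apply hBu
      have := (InnerProductSpace.toDual ℝ V).apply_symm_apply (B u)
      rw [← hw, h] at this; simp [← this]
    have hmem : ‖B u‖ ∈ (fun v => ‖B u v‖ / ‖v‖) '' {v : V | v ≠ 0} :=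
      ⟨w, hw0, aux_ratio_eq (B u) hBu⟩
    have hbdd : ∀ x ∈ (fun v => ‖B u v‖ / ‖v‖) '' {v : V | v ≠ 0}, x ≤ ‖B u‖ := by
      rintro x ⟨v, _, rfl⟩; exact aux_ratio_le (B u) v
    exact le_antisymm (le_csSup ⟨‖B u‖, hbdd⟩ hmem) (csSup_le ⟨_, hmem⟩ hbdd)
  · intro γ hγ hinf u hu hu0
    have hBu : B u ≠ 0 := by
      intro h
      have := hinf u
      rw [h, norm_zero] at this
      have : ‖u‖ ≤ 0 := nonpos_of_mul_nonpos_right (by linarith) hγ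
      exact hu0 (norm_le_zero_iff.mp this)
    rw [key u hu hBu]
    exact hinf u
end

section
/- Let U and V be real Hilbert spaces, V' the topological dual of V with dual norm ‖f‖_{V'} = sup_{v ∈ V\{0}} |f(v)|/‖v‖_V, R_V : V → V' the Riesz map determined by (R_V v)(w) = (v,w)_V, B : U → V' a continuous linear operator with associated bilinear form b(u,v) = (Bu)(v), ℓ ∈ V', U_h a closed subspace of U, and V^opt = R_V⁻¹(B(U_h)) the optimal test space. Then u_h ∈ U_h satisfies the Petrov–Galerkin equations b(u_h, δv) = ℓ(δv) for all δv ∈ V^opt if and only if u_h minimizes u ↦ ‖Bu − ℓ‖_{V'}² over U_h. -/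
open RealInnerProductSpace

/-- Petrov–Galerkin characterization of the residual minimizer: `u_h ∈ U_h`
satisfies `b(u_h, δv) = ℓ(δv)` for all `δv` in the optimal test space
`V^opt = R_V⁻¹(B(U_h))` if and only if `u_h` minimizes `u ↦ ‖Bu − ℓ‖_{V'}²`
over `U_h`. -/
theorem stmt_8 {U V : Type*}
    [NormedAddCommGroup U] [InnerProductSpace ℝ U] [CompleteSpace U]
    [NormedAddCommGroup V] [InnerProductSpace ℝ V] [CompleteSpace V]
    (B : U →L[ℝ] StrongDual ℝ V) (ℓ : StrongDual ℝ V)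
    (Uh : Submodule ℝ U) (hUh : IsClosed (Uh : Set U))
    (Vopt : Set V)
    (hVopt : Vopt =
      (fun δu => (InnerProductSpace.toDual ℝ V).symm (B δu)) '' (Uh : Set U))
    (uh : U) (huh : uh ∈ Uh) :
    (∀ δv ∈ Vopt, B uh δv = ℓ δv) ↔
      (∀ u ∈ Uh, ‖B uh - ℓ‖ ^ 2 ≤ ‖B u - ℓ‖ ^ 2) := by
  set e := InnerProductSpace.toDual ℝ V with he
  have happ : ∀ (g : StrongDual ℝ V) (v : V), g v = ⟪e.symm g, v⟫ := by
    intro g v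
    conv_lhs => rw [← e.apply_symm_apply g]
    simp [he, InnerProductSpace.toDual_apply_apply]
  have hnorm : ∀ (g : StrongDual ℝ V), ‖g‖ = ‖e.symm g‖ :=
    fun g => (e.symm.norm_map g).symm
  set r : V := e.symm (B uh) - e.symm ℓ with hr
  have hres : ∀ u : U, e.symm (B u) - e.symm ℓ = r + e.symm (B (u - uh)) := by
    intro u
    rw [map_sub B, map_sub e.symm, hr]
    abel
  have hdiff : ∀ (g : StrongDual ℝ V), ‖g - ℓ‖ ^ 2 = ‖e.symm g - e.symm ℓ‖ ^ 2 := by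
    intro g
    rw [hnorm, map_sub]
  -- LHS rephrased
  have hLHS : (∀ δv ∈ Vopt, B uh δv = ℓ δv) ↔ ∀ δu ∈ Uh, ⟪r, e.symm (B δu)⟫ = 0 := by
    rw [hVopt]
    constructor
    · intro h δu hδu
      have := h _ ⟨δu, hδu, rfl⟩
      rw [happ (B uh), happ ℓ] at this
      rw [hr, inner_sub_left, this, sub_self]
    · rintro h δv ⟨δu, hδu, rfl⟩
      have := h δu hδu
      rw [hr, inner_sub_left, sub_eq_zero] at this
      rw [happ (B uh), happ ℓ, this]
  rw [hLHS]
  constructor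
  · intro h u hu
    rw [hdiff, hdiff, hres u, hres uh, sub_self, map_zero, map_zero, add_zero]
    have horth : ⟪r, e.symm (B (u - uh))⟫ = 0 := h _ (Uh.sub_mem hu huh)
    rw [norm_add_sq_real, horth]
    nlinarith [sq_nonneg ‖e.symm (B (u - uh))‖]
  · intro h δu hδu
    set c : ℝ := ⟪r, e.symm (B δu)⟫ with hc
    set n : ℝ := ‖e.symm (B δu)‖ ^ 2 with hn
    have hn0 : 0 ≤ n := sq_nonneg _
    have key : ∀ t : ℝ, 0 ≤ 2 * t * c + t ^ 2 * n := by
      intro t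
      have hmem : uh + t • δu ∈ Uh := Uh.add_mem huh (Uh.smul_mem t hδu)
      have := h _ hmem
      rw [hdiff, hdiff, hres (uh + t • δu), hres uh, sub_self, map_zero, map_zero,
        add_zero] at this
      have hsimp : e.symm (B (uh + t • δu - uh)) = t • e.symm (B δu) := by
        rw [add_sub_cancel_left, map_smul, map_smul]
      rw [hsimp, norm_add_sq_real, real_inner_smul_right, norm_smul] at this
      have : ‖r‖ ^ 2 ≤ ‖r‖ ^ 2 + 2 * (t * c) + (|t| * ‖e.symm (B δu)‖) ^ 2 := by
        simpa [Real.norm_eq_abs] using this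
      nlinarith [sq_abs t]
    have hpos : (0:ℝ) < n + 1 := by linarith
    have hs : (0:ℝ) < (n + 1)⁻¹ := by positivity
    have hsn : (n + 1)⁻¹ * n ≤ 1 := by
      rw [inv_mul_le_iff₀ hpos]
      linarith
    have hkey2 := key (-(c * (n + 1)⁻¹))
    have hle : c ^ 2 ≤ 0 := by
      nlinarith [mul_nonneg hs.le (sq_nonneg c)]
    exact pow_eq_zero_iff two_ne_zero |>.mp (le_antisymm hle (sq_nonneg c))
end

section
/- Let U and V be real Hilbert spaces, B : U → V' a continuous linear operator with associated bilinear form b(u,v) = (Bu)(v), ℓ ∈ V', U_h a closed subspace of U, and let W be a closed subspace of V (the enriched test space V^enr), which is itself a Hilbert space under the inner product of V; let R_W : W → W' denote the Riesz map of W, and for f ∈ V' let f|_W ∈ W' denote its restriction to W, with ‖f|_W‖_{W'} = sup_{v ∈ W\{0}} |f(v)|/‖v‖_V. Then a pair (u_h, ψ_h) ∈ U_h × W satisfies the discrete saddle-point system: −(ψ_h, v)_V + b(u_h, v) = ℓ(v) for all v ∈ W, and b(δu, ψ_h) = 0 for all δu ∈ U_h, if and only if ψ_h = R_W⁻¹((B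 u_h − ℓ)|_W) and u_h minimizes u ↦ ‖(Bu − ℓ)|_W‖_{W'}² over U_h. -/
open scoped RealInnerProductSpace

private lemma stmt_11_aux (a b : ℝ) (hb : 0 ≤ b) (h : ∀ t : ℝ, 0 ≤ 2 * t * a + t ^ 2 * b) :
    a = 0 := by
  have hc : (0:ℝ) < b + 1 := by linarith
  have h' := h (-a / (b + 1))
  have key : 0 ≤ (2 * (-a / (b+1)) * a + (-a / (b+1)) ^ 2 * b) * (b+1) ^ 2 :=
    mul_nonneg h' (sq_nonneg _)
  have expand : (2 * (-a / (b+1)) * a + (-a / (b+1)) ^ 2 * b) * (b+1) ^ 2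
      = -(a ^ 2) * (b + 2) := by
    field_simp
    ring
  rw [expand] at key
  have ha2 : a ^ 2 ≤ 0 := by nlinarith
  have ha0 : a ^ 2 = 0 := le_antisymm ha2 (sq_nonneg a)
  exact (pow_eq_zero_iff two_ne_zero).mp ha0

/-- Discrete saddle-point characterization with an enriched test space: for a
closed subspace `W ⊆ V` (the enriched test space), a pair `(u_h, ψ_h)` with
`u_h ∈ U_h` and `ψ_h ∈ W` satisfies `−(ψ_h,v)_V + b(u_h,v) = ℓ(v)` for all
`v ∈ W` and `b(δu,ψ_h) = 0` for all `δu ∈ U_h` if and only if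
`ψ_h = R_W⁻¹((B u_h − ℓ)|_W)` and `u_h` minimizes `u ↦ ‖(Bu − ℓ)|_W‖_{W'}²`
over `U_h`. -/
theorem stmt_11 {U V : Type*}
    [NormedAddCommGroup U] [InnerProductSpace ℝ U] [CompleteSpace U]
    [NormedAddCommGroup V] [InnerProductSpace ℝ V] [CompleteSpace V]
    (B : U →L[ℝ] StrongDual ℝ V) (ℓ : StrongDual ℝ V)
    (Uh : Submodule ℝ U) (hUh : IsClosed (Uh : Set U))
    (W : Submodule ℝ V) (hW : IsClosed (W : Set V))
    (uh : U) (huh : uh ∈ Uh) (ψh : W) :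
    letI : CompleteSpace W := hW.completeSpace_coe
    ((∀ v : W, -⟪(ψh : V), (v : V)⟫ + B uh v = ℓ v) ∧
        (∀ δu ∈ Uh, B δu (ψh : V) = 0)) ↔
      (ψh = (InnerProductSpace.toDual ℝ W).symm ((B uh - ℓ).comp W.subtypeL) ∧
        ∀ u ∈ Uh,
          ‖(B uh - ℓ).comp W.subtypeL‖ ^ 2 ≤ ‖(B u - ℓ).comp W.subtypeL‖ ^ 2) := by
  letI : CompleteSpace W := hW.completeSpace_coe
  set g : U → W := fun u => (InnerProductSpace.toDual ℝ W).symm ((B u - ℓ).comp W.subtypeL)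
    with hg
  have key : ∀ (u : U) (w : W), ⟪g u, w⟫ = B u (w : V) - ℓ (w : V) := by
    intro u w
    rw [hg]
    simp only [InnerProductSpace.toDual_symm_apply]
    simp
  have hnorm : ∀ u : U, ‖(B u - ℓ).comp W.subtypeL‖ = ‖g u‖ := by
    intro u
    rw [hg]
    exact ((InnerProductSpace.toDual ℝ W).symm.norm_map _).symm
  have hdiff : ∀ (u δu : U) (t : ℝ) (w : W),
      ⟪g (u + t • δu) - g u, w⟫ = t * B δu (w : V) := by
    intro u δu t w
    rw [inner_sub_left, key, key]
    simp only [map_add, map_smul, ContinuousLinearMap.add_apply,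
      ContinuousLinearMap.coe_smul', Pi.smul_apply, smul_eq_mul]
    ring
  have hdiff1 : ∀ (u δu : U) (w : W), ⟪g (u + δu) - g u, w⟫ = B δu (w : V) := by
    intro u δu w
    have := hdiff u δu 1 w
    rw [one_smul] at this
    simpa using this
  have hz : ∀ (u δu : U) (t : ℝ), g (u + t • δu) - g u = t • (g (u + δu) - g u) := by
    intro u δu t
    apply ext_inner_right ℝ
    intro w
    rw [hdiff, real_inner_smul_left, hdiff1]
  constructor
  · rintro ⟨h1, h2⟩
    have hψ : ψh = g uh := by
      apply ext_inner_right ℝ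
      intro w
      rw [key, Submodule.coe_inner]
      have := h1 w
      linarith
    refine ⟨hψ, ?_⟩
    intro u hu
    rw [hnorm, hnorm]
    have hdecomp : g u = g uh + (g u - g uh) := by abel
    rw [hdecomp, norm_add_sq_real]
    have horth : ⟪g uh, g u - g uh⟫ = 0 := by
      rw [real_inner_comm, inner_sub_left, key, key]
      have hB : B u (ψh : V) - B uh (ψh : V) = 0 := by
        have := h2 (u - uh) (Uh.sub_mem hu huh)
        simpa [map_sub] using this
      rw [hψ] at hB
      linarith
    rw [horth]
    nlinarith [sq_nonneg ‖g u - g uh‖]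
  · rintro ⟨hψ', hmin⟩
    have hψ : ψh = g uh := hψ'
    constructor
    · intro v
      have := key uh v
      rw [← hψ, Submodule.coe_inner] at this
      linarith
    · intro δu hδu
      set z := g (uh + δu) - g uh with hzdef
      set a := B δu (ψh : V) with ha
      have hab : ∀ t : ℝ, 0 ≤ 2 * t * a + t ^ 2 * ‖z‖ ^ 2 := by
        intro t
        have hmem : uh + t • δu ∈ Uh := Uh.add_mem huh (Uh.smul_mem t hδu)
        have hle := hmin (uh + t • δu) hmem
        rw [hnorm, hnorm] at hle
        have hg2 : g (uh + t • δu) = g uh + t • z := by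
          rw [hzdef, ← hz]; abel
        rw [hg2, norm_add_sq_real] at hle
        have hinner : ⟪g uh, t • z⟫ = t * a := by
          rw [real_inner_smul_right, real_inner_comm, hzdef, hdiff1, ha, hψ]
        rw [hinner, norm_smul] at hle
        simp only [Real.norm_eq_abs, mul_pow, sq_abs] at hle
        nlinarith
      exact stmt_11_aux a (‖z‖ ^ 2) (sq_nonneg _) hab
end
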